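/- If f : |v| → |w| is an embedding of vtrees and α is an SDD over |v| respecting v, then 𝒮(f)(α) is an SDD over |w| respecting w; the analogous statement holds for ZSDDs with 𝒵(f). -/

import Mathlib

/-- SDDs over X: terminals ⊤, ⊥, literals x, ¬x, and decompositions. -/
inductive SDD (X : Type) where
  | top : SDD X
  | bot : SDD X
  | lit (x : X) : SDD X
  | nlit (x : X) : SDD X
  | decomp (l : List (SDD X × SDD X)) : SDD X

mutual
/-- Relabeling of SDDs (action of the functor 𝒮 on maps). -/
def Smap {X Y : Type} (f : X → Y) : SDD X → SDD Y
  | .top => .top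
  | .bot => .bot
  | .lit x => .lit (f x)
  | .nlit x => .nlit (f x)
  | .decomp l => .decomp (SmapList f l)

def SmapList {X Y : Type} (f : X → Y) :
    List (SDD X × SDD X) → List (SDD Y × SDD Y)
  | [] => []
  | (p, s) :: rest => (Smap f p, Smap f s) :: SmapList f rest
end

/-- ZSDDs over X: terminals ⊥, ε, literals x, ±x, and decompositions. -/
inductive ZSDD (X : Type) where
  | bot : ZSDD X
  | eps : ZSDD X
  | lit (x : X) : ZSDD X
  | plit (x : X) : ZSDD X
  | decomp (l : List (ZSDD X × ZSDD X)) : ZSDD X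

mutual
/-- Relabeling of ZSDDs (action of the functor 𝒵 on maps). -/
def Zmap {X Y : Type} (f : X → Y) : ZSDD X → ZSDD Y
  | .bot => .bot
  | .eps => .eps
  | .lit x => .lit (f x)
  | .plit x => .plit (f x)
  | .decomp l => .decomp (ZmapList f l)

def ZmapList {X Y : Type} (f : X → Y) :
    List (ZSDD X × ZSDD X) → List (ZSDD Y × ZSDD Y)
  | [] => []
  | (p, s) :: rest => (Zmap f p, Zmap f s) :: ZmapList f rest
end

/-- Vtrees with leaves labeled by elements of X. -/
inductive VTree (X : Type) where
  | leaf (x : X) : VTree X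
  | node (l r : VTree X) : VTree X

/-- The set of leaf labels of a vtree. -/
def VTree.leaves {X : Type} : VTree X → Set X
  | .leaf x => {x}
  | .node l r => l.leaves ∪ r.leaves

/-- Embeddings of vtrees. -/
inductive IsEmb {X Y : Type} (f : X → Y) : VTree X → VTree Y → Prop where
  | leaf (x : X) (w : VTree Y) (h : f x ∈ w.leaves) : IsEmb f (.leaf x) w
  | left {v : VTree X} {w₁ w₂ : VTree Y} (h : IsEmb f v w₁) :
      IsEmb f v (.node w₁ w₂)
  | right {v : VTree X} {w₁ w₂ : VTree Y} (h : IsEmb f v w₂) :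
      IsEmb f v (.node w₁ w₂)
  | node {v₁ v₂ : VTree X} {w₁ w₂ : VTree Y}
      (h₁ : IsEmb f v₁ w₁) (h₂ : IsEmb f v₂ w₂) :
      IsEmb f (.node v₁ v₂) (.node w₁ w₂)

/-- An SDD respects a vtree. -/
inductive SRespects {X : Type} : SDD X → VTree X → Prop where
  | top (v : VTree X) : SRespects .top v
  | bot (v : VTree X) : SRespects .bot v
  | lit (x : X) : SRespects (.lit x) (.leaf x)
  | nlit (x : X) : SRespects (.nlit x) (.leaf x)
  | left {α : SDD X} {v₁ v₂ : VTree X} (h : SRespects α v₁) :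
      SRespects α (.node v₁ v₂)
  | right {α : SDD X} {v₁ v₂ : VTree X} (h : SRespects α v₂) :
      SRespects α (.node v₁ v₂)
  | decomp {l : List (SDD X × SDD X)} {v₁ v₂ : VTree X}
      (hp : ∀ p s, (p, s) ∈ l → SRespects p v₁)
      (hs : ∀ p s, (p, s) ∈ l → SRespects s v₂) :
      SRespects (.decomp l) (.node v₁ v₂)

/-- A ZSDD respects a vtree. -/
inductive ZRespects {X : Type} : ZSDD X → VTree X → Prop where
  | bot (v : VTree X) : ZRespects .bot v
  | eps (v : VTree X) : ZRespects .eps v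
  | lit (x : X) : ZRespects (.lit x) (.leaf x)
  | plit (x : X) : ZRespects (.plit x) (.leaf x)
  | left {α : ZSDD X} {v₁ v₂ : VTree X} (h : ZRespects α v₁) :
      ZRespects α (.node v₁ v₂)
  | right {α : ZSDD X} {v₁ v₂ : VTree X} (h : ZRespects α v₂) :
      ZRespects α (.node v₁ v₂)
  | decomp {l : List (ZSDD X × ZSDD X)} {v₁ v₂ : VTree X}
      (hp : ∀ p s, (p, s) ∈ l → ZRespects p v₁)
      (hs : ∀ p s, (p, s) ∈ l → ZRespects s v₂) :
      ZRespects (.decomp l) (.node v₁ v₂)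

lemma mem_SmapList {X Y : Type} (f : X → Y) (l : List (SDD X × SDD X))
    (q : SDD Y × SDD Y) (h : q ∈ SmapList f l) :
    ∃ p s, (p, s) ∈ l ∧ q = (Smap f p, Smap f s) := by
  induction l with
  | nil => simp [SmapList] at h
  | cons hd tl ih =>
    obtain ⟨p, s⟩ := hd
    simp only [SmapList, List.mem_cons] at h
    rcases h with h | h
    · exact ⟨p, s, List.mem_cons_self, h⟩
    · obtain ⟨p', s', hm, he⟩ := ih h
      exact ⟨p', s', List.mem_cons_of_mem _ hm, he⟩

lemma mem_ZmapList {X Y : Type} (f : X → Y) (l : List (ZSDD X × ZSDD X))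
    (q : ZSDD Y × ZSDD Y) (h : q ∈ ZmapList f l) :
    ∃ p s, (p, s) ∈ l ∧ q = (Zmap f p, Zmap f s) := by
  induction l with
  | nil => simp [ZmapList] at h
  | cons hd tl ih =>
    obtain ⟨p, s⟩ := hd
    simp only [ZmapList, List.mem_cons] at h
    rcases h with h | h
    · exact ⟨p, s, List.mem_cons_self, h⟩
    · obtain ⟨p', s', hm, he⟩ := ih h
      exact ⟨p', s', List.mem_cons_of_mem _ hm, he⟩

lemma slit_of_mem {Y : Type} (y : Y) (w : VTree Y) (h : y ∈ w.leaves) :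
    SRespects (.lit y) w := by
  induction w with
  | leaf x => simp [VTree.leaves] at h; subst h; exact .lit y
  | node l r ihl ihr =>
    rcases h with h | h
    · exact .left (ihl h)
    · exact .right (ihr h)

lemma snlit_of_mem {Y : Type} (y : Y) (w : VTree Y) (h : y ∈ w.leaves) :
    SRespects (.nlit y) w := by
  induction w with
  | leaf x => simp [VTree.leaves] at h; subst h; exact .nlit y
  | node l r ihl ihr =>
    rcases h with h | h
    · exact .left (ihl h)
    · exact .right (ihr h)

lemma zlit_of_mem {Y : Type} (y : Y) (w : VTree Y) (h : y ∈ w.leaves) :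
    ZRespects (.lit y) w := by
  induction w with
  | leaf x => simp [VTree.leaves] at h; subst h; exact .lit y
  | node l r ihl ihr =>
    rcases h with h | h
    · exact .left (ihl h)
    · exact .right (ihr h)

lemma zplit_of_mem {Y : Type} (y : Y) (w : VTree Y) (h : y ∈ w.leaves) :
    ZRespects (.plit y) w := by
  induction w with
  | leaf x => simp [VTree.leaves] at h; subst h; exact .plit y
  | node l r ihl ihr =>
    rcases h with h | h
    · exact .left (ihl h)
    · exact .right (ihr h)

theorem relabel_preserves_respects {X Y : Type} (f : X → Y)
    (v : VTree X) (w : VTree Y) (hf : IsEmb f v w) :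
    (∀ α : SDD X, SRespects α v → SRespects (Smap f α) w) ∧
    (∀ α : ZSDD X, ZRespects α v → ZRespects (Zmap f α) w) := by
  induction hf with
  | leaf x w h =>
    constructor
    · intro α hα
      cases hα with
      | top => exact .top w
      | bot => exact .bot w
      | lit => exact slit_of_mem _ _ h
      | nlit => exact snlit_of_mem _ _ h
    · intro α hα
      cases hα with
      | bot => exact .bot w
      | eps => exact .eps w
      | lit => exact zlit_of_mem _ _ h
      | plit => exact zplit_of_mem _ _ h
  | left h ih =>
    exact ⟨fun α hα => .left (ih.1 α hα), fun α hα => .left (ih.2 α hα)⟩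
  | right h ih =>
    exact ⟨fun α hα => .right (ih.1 α hα), fun α hα => .right (ih.2 α hα)⟩
  | node h₁ h₂ ih₁ ih₂ =>
    constructor
    · intro α hα
      cases hα with
      | top => exact .top _
      | bot => exact .bot _
      | left h => exact .left (ih₁.1 _ h)
      | right h => exact .right (ih₂.1 _ h)
      | decomp hp hs =>
        refine .decomp ?_ ?_ <;> intro p' s' hm <;>
          obtain ⟨p, s, hm', he⟩ := mem_SmapList _ _ _ hm <;>
          obtain ⟨h1, h2⟩ := Prod.mk.injEq .. ▸ he
        · exact h1 ▸ ih₁.1 p (hp p s hm')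
        · exact h2 ▸ ih₂.1 s (hs p s hm')
    · intro α hα
      cases hα with
      | bot => exact .bot _
      | eps => exact .eps _
      | left h => exact .left (ih₁.2 _ h)
      | right h => exact .right (ih₂.2 _ h)
      | decomp hp hs =>
        refine .decomp ?_ ?_ <;> intro p' s' hm <;>
          obtain ⟨p, s, hm', he⟩ := mem_ZmapList _ _ _ hm <;>
          obtain ⟨h1, h2⟩ := Prod.mk.injEq .. ▸ he
        · exact h1 ▸ ih₁.2 p (hp p s hm')
        · exact h2 ▸ ih₂.2 s (hs p s hm')
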